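/- Let Ω ⊂ ℝ² be a measurable set and u, v : Ω → ℝ be measurable functions such that the integrals ∫_Ω (e^{u²} - 1 - u²) and ∫_Ω (e^{v²} - 1 - v²) are finite. Then 0 ≤ ∫_Ω (e^{|uv|} - 1 - |uv|) ≤ (∫_Ω (e^{u²} - 1 - u²))^{1/2} · (∫_Ω (e^{v²} - 1 - v²))^{1/2}. -/

import Mathlib

open MeasureTheory

/-- `exp t - 1 - t` as a power series. -/
lemma exp_sub_one_sub_eq_tsum (t : ℝ) :
    Real.exp t - 1 - t = ∑' n : ℕ, t ^ (n + 2) / (Nat.factorial (n + 2) : ℝ) := by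
  have hs : Summable (fun n : ℕ => t ^ n / (Nat.factorial n : ℝ)) := Real.summable_pow_div_factorial t
  have h0 : Real.exp t = ∑' n : ℕ, t ^ n / (Nat.factorial n : ℝ) := by
    rw [Real.exp_eq_exp_ℝ, NormedSpace.exp_eq_tsum_div]
  have h1 : (∑' n : ℕ, t ^ n / (Nat.factorial n : ℝ)) = t ^ 0 / (Nat.factorial 0 : ℝ) + ∑' n : ℕ, t ^ (n + 1) / (Nat.factorial (n + 1) : ℝ) :=
    Summable.tsum_eq_zero_add hs
  have hs1 : Summable (fun n : ℕ => t ^ (n + 1) / (Nat.factorial (n + 1) : ℝ)) :=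
    (summable_nat_add_iff 1).2 hs
  have h2 : (∑' n : ℕ, t ^ (n + 1) / (Nat.factorial (n + 1) : ℝ)) =
      t ^ (0 + 1) / (Nat.factorial (0 + 1) : ℝ) +
        ∑' n : ℕ, t ^ (n + 2) / (Nat.factorial (n + 2) : ℝ) :=
    Summable.tsum_eq_zero_add hs1
  simp only [pow_zero, Nat.factorial_zero, Nat.cast_one, div_one, zero_add, pow_one,
    Nat.factorial_one] at h1 h2
  rw [h0, h1, h2]
  ring

lemma summable_shift2 (t : ℝ) : Summable (fun n : ℕ => t ^ (n + 2) / (Nat.factorial (n + 2) : ℝ)) :=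
  (summable_nat_add_iff 2).2 (Real.summable_pow_div_factorial t)

/-- Pointwise Cauchy-Schwarz-type inequality. -/
lemma key_ineq (a b : ℝ) (ha : 0 ≤ a) (hb : 0 ≤ b) :
    Real.exp (a * b) - 1 - a * b ≤
      Real.sqrt (Real.exp (a ^ 2) - 1 - a ^ 2) * Real.sqrt (Real.exp (b ^ 2) - 1 - b ^ 2) := by
  rw [exp_sub_one_sub_eq_tsum, exp_sub_one_sub_eq_tsum, exp_sub_one_sub_eq_tsum]
  have habs : Summable (fun n : ℕ => (a * b) ^ (n + 2) / (Nat.factorial (n + 2) : ℝ)) := summable_shift2 _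
  refine Summable.tsum_le_of_sum_le habs fun s => ?_
  have hterm : ∀ n : ℕ, (a * b) ^ (n + 2) / (Nat.factorial (n + 2) : ℝ) =
      Real.sqrt ((a ^ 2) ^ (n + 2) / (Nat.factorial (n + 2) : ℝ)) * Real.sqrt ((b ^ 2) ^ (n + 2) / (Nat.factorial (n + 2) : ℝ)) := by
    intro n
    rw [← Real.sqrt_mul (by positivity)]
    have : (a ^ 2) ^ (n + 2) / (Nat.factorial (n + 2) : ℝ) * ((b ^ 2) ^ (n + 2) / (Nat.factorial (n + 2) : ℝ)) =
        ((a * b) ^ (n + 2) / (Nat.factorial (n + 2) : ℝ)) ^ 2 := by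
      rw [div_mul_div_comm, div_pow, ← mul_pow, ← mul_pow, ← pow_mul, ← pow_mul,
        Nat.mul_comm, sq]
    rw [this, Real.sqrt_sq (by positivity)]
  calc ∑ n ∈ s, (a * b) ^ (n + 2) / (Nat.factorial (n + 2) : ℝ)
      = ∑ n ∈ s, Real.sqrt ((a ^ 2) ^ (n + 2) / (Nat.factorial (n + 2) : ℝ)) *
          Real.sqrt ((b ^ 2) ^ (n + 2) / (Nat.factorial (n + 2) : ℝ)) := by
        exact Finset.sum_congr rfl fun n _ => hterm n
    _ ≤ Real.sqrt (∑ n ∈ s, (a ^ 2) ^ (n + 2) / (Nat.factorial (n + 2) : ℝ)) *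
          Real.sqrt (∑ n ∈ s, (b ^ 2) ^ (n + 2) / (Nat.factorial (n + 2) : ℝ)) :=
        Real.sum_sqrt_mul_sqrt_le s (fun n => by positivity) (fun n => by positivity)
    _ ≤ Real.sqrt (∑' n : ℕ, (a ^ 2) ^ (n + 2) / (Nat.factorial (n + 2) : ℝ)) *
          Real.sqrt (∑' n : ℕ, (b ^ 2) ^ (n + 2) / (Nat.factorial (n + 2) : ℝ)) := by
        gcongr <;>
          exact Summable.sum_le_tsum s (fun n _ => by positivity) (summable_shift2 _)

theorem stmt_13 (Ω : Set (ℝ × ℝ)) (hΩ : MeasurableSet Ω)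
    (u v : ℝ × ℝ → ℝ) (hu : Measurable u) (hv : Measurable v)
    (hiu : IntegrableOn (fun x => Real.exp ((u x) ^ 2) - 1 - (u x) ^ 2) Ω)
    (hiv : IntegrableOn (fun x => Real.exp ((v x) ^ 2) - 1 - (v x) ^ 2) Ω) :
    0 ≤ ∫ x in Ω, (Real.exp |u x * v x| - 1 - |u x * v x|) ∧
    ∫ x in Ω, (Real.exp |u x * v x| - 1 - |u x * v x|) ≤
      Real.sqrt (∫ x in Ω, (Real.exp ((u x) ^ 2) - 1 - (u x) ^ 2)) *
      Real.sqrt (∫ x in Ω, (Real.exp ((v x) ^ 2) - 1 - (v x) ^ 2)) := by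
  set G : ℝ × ℝ → ℝ := fun x => Real.exp ((u x) ^ 2) - 1 - (u x) ^ 2 with hGdef
  set H : ℝ × ℝ → ℝ := fun x => Real.exp ((v x) ^ 2) - 1 - (v x) ^ 2 with hHdef
  set F : ℝ × ℝ → ℝ := fun x => Real.exp |u x * v x| - 1 - |u x * v x| with hFdef
  have hexp_nonneg : ∀ t : ℝ, 0 ≤ Real.exp t - 1 - t := by
    intro t
    have := Real.add_one_le_exp t
    linarith
  have hF0 : ∀ x, 0 ≤ F x := fun x => hexp_nonneg _
  have hG0 : ∀ x, 0 ≤ G x := fun x => hexp_nonneg _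
  have hH0 : ∀ x, 0 ≤ H x := fun x => hexp_nonneg _
  have hFle : ∀ x, F x ≤ Real.sqrt (G x) * Real.sqrt (H x) := by
    intro x
    have h := key_ineq |u x| |v x| (abs_nonneg _) (abs_nonneg _)
    rw [← abs_mul, sq_abs, sq_abs] at h
    exact h
  -- measurability
  have hGm : Measurable G :=
    ((Real.measurable_exp.comp (hu.pow_const 2)).sub measurable_const).sub (hu.pow_const 2)
  have hHm : Measurable H :=
    ((Real.measurable_exp.comp (hv.pow_const 2)).sub measurable_const).sub (hv.pow_const 2)
  have hFm : Measurable F :=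
    ((Real.measurable_exp.comp (hu.mul hv).abs).sub measurable_const).sub (hu.mul hv).abs
  have hsGm : Measurable fun x => Real.sqrt (G x) := Real.continuous_sqrt.measurable.comp hGm
  have hsHm : Measurable fun x => Real.sqrt (H x) := Real.continuous_sqrt.measurable.comp hHm
  -- AM-GM bound for domination
  have hAMGM : ∀ x, Real.sqrt (G x) * Real.sqrt (H x) ≤ (G x + H x) / 2 := by
    intro x
    have h1 : Real.sqrt (G x) * Real.sqrt (H x) ≤
        (Real.sqrt (G x) ^ 2 + Real.sqrt (H x) ^ 2) / 2 := by
      nlinarith [sq_nonneg (Real.sqrt (G x) - Real.sqrt (H x))]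
    rwa [Real.sq_sqrt (hG0 x), Real.sq_sqrt (hH0 x)] at h1
  have hBint : IntegrableOn (fun x => (G x + H x) / 2) Ω := (hiu.add hiv).div_const 2
  have hB0 : ∀ x, 0 ≤ (G x + H x) / 2 := fun x =>
    div_nonneg (add_nonneg (hG0 x) (hH0 x)) two_pos.le
  have hGHint : IntegrableOn (fun x => Real.sqrt (G x) * Real.sqrt (H x)) Ω := by
    refine Integrable.mono hBint ((hsGm.mul hsHm).aestronglyMeasurable) ?_
    filter_upwards with x
    rw [Real.norm_of_nonneg (by positivity), Real.norm_of_nonneg (hB0 x)]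
    exact hAMGM x
  have hFint : IntegrableOn F Ω := by
    refine Integrable.mono hBint hFm.aestronglyMeasurable ?_
    filter_upwards with x
    rw [Real.norm_of_nonneg (hF0 x), Real.norm_of_nonneg (hB0 x)]
    exact (hFle x).trans (hAMGM x)
  constructor
  · exact setIntegral_nonneg hΩ fun x _ => hF0 x
  · have h1 : ∫ x in Ω, F x ≤ ∫ x in Ω, Real.sqrt (G x) * Real.sqrt (H x) :=
      setIntegral_mono_on hFint hGHint hΩ fun x _ => hFle x
    have hpq : (2:ℝ).HolderConjugate 2 := Real.HolderConjugate.two_two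
    have hmemG : MemLp (fun x => Real.sqrt (G x)) (ENNReal.ofReal 2) (volume.restrict Ω) := by
      rw [show ENNReal.ofReal 2 = 2 by norm_num]
      rw [memLp_two_iff_integrable_sq hsGm.aestronglyMeasurable]
      have : (fun x => Real.sqrt (G x) ^ 2) = G := by
        funext x; exact Real.sq_sqrt (hG0 x)
      rwa [this]
    have hmemH : MemLp (fun x => Real.sqrt (H x)) (ENNReal.ofReal 2) (volume.restrict Ω) := by
      rw [show ENNReal.ofReal 2 = 2 by norm_num]
      rw [memLp_two_iff_integrable_sq hsHm.aestronglyMeasurable]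
      have : (fun x => Real.sqrt (H x) ^ 2) = H := by
        funext x; exact Real.sq_sqrt (hH0 x)
      rwa [this]
    have h2 := integral_mul_le_Lp_mul_Lq_of_nonneg hpq
      (Filter.Eventually.of_forall fun x => Real.sqrt_nonneg (G x))
      (Filter.Eventually.of_forall fun x => Real.sqrt_nonneg (H x)) hmemG hmemH
    have hGsq : (fun x => Real.sqrt (G x) ^ (2:ℝ)) = G := by
      funext x; rw [Real.rpow_two]; exact Real.sq_sqrt (hG0 x)
    have hHsq : (fun x => Real.sqrt (H x) ^ (2:ℝ)) = H := by
      funext x; rw [Real.rpow_two]; exact Real.sq_sqrt (hH0 x)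
    simp only [hGsq, hHsq] at h2
    rw [Real.sqrt_eq_rpow, Real.sqrt_eq_rpow]
    exact h1.trans h2
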